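/- Let α ∈ (0,1), m > 0 with K := 2·m^{1−1/α}, let d, d_w > 0, d_J > 1, L > 1, and let c_1, c_2, c_3, c_4, c_6, C_η, A_9, A_10 > 0 be constants. For c > 0, t > 0, ρ > 0 and measurable η : (0,∞) → [0,∞), set Φ_c(t,ρ) := e^{mt}·∫_0^∞ f_c(s,ρ)·e^{−m^{1/α} s}·η(s) ds. Then there exist constants C_11, C_12 > 0 depending only on the listed constants such that: for every nonnegative integer M, every t ∈ (0,1), every r ∈ (0,1) with r ≤ L^M, and all measurable η, G : (0,∞) → [0,∞) satisfying (i) η(u) ≤ C_η·t·u^{−1−α} for all u > 0; (ii) c_1·f_{c_2}(s,r) ≤ G(s) for all s > 0, G(s) ≤ c_3·f_{c_4}(s,r) for 0 < s < K·L^{M d_w}, and G(s) ≤ c_6·L^{−Md} for s ≥ K·L^{M d_w}; (iii) A_9·q(t,r) ≤ Φ_{c_2}(t,r) and Φ_{c_4}(t,r) ≤ A_10·q(t,r); one has C_11·q(t,r) ≤ e^{mt}·∫_0^∞ G(s)·e^{−m^{1/α} s}·η(s) ds ≤ C_12·q(t,r). -/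

import Mathlib

open MeasureTheory Set

/-- The subgaussian profile `f_c(t,r) = t^{-d/d_w} exp(-c (r / t^{1/d_w})^{d_w/(d_J-1)})`. -/
noncomputable def fprof (d dw dJ c t r : ℝ) : ℝ :=
  t ^ (-(d / dw)) * Real.exp (-c * (r / t ^ (1 / dw)) ^ (dw / (dJ - 1)))

/-- The stable heat-kernel profile
`q(t,r) = t^{-d/(α d_w)} · min((t^{1/(α d_w)}/r)^{d+α d_w}, 1)`. -/
noncomputable def qprof (d dw α t r : ℝ) : ℝ :=
  t ^ (-(d / (α * dw))) * min ((t ^ (1 / (α * dw)) / r) ^ (d + α * dw)) 1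

/-- The relativistic subordination of the subgaussian profile:
`Φ_c(t,ρ) = e^{mt} ∫_0^∞ f_c(s,ρ) e^{-m^{1/α} s} η(s) ds`. -/
noncomputable def Phi (d dw dJ α m : ℝ) (η : ℝ → ℝ) (c t ρ : ℝ) : ℝ :=
  Real.exp (m * t) *
    ∫ s in Ioi (0 : ℝ), fprof d dw dJ c s ρ * Real.exp (-(m ^ (1 / α)) * s) * η s

lemma exp_neg_le_factorial_div {u : ℝ} (hu : 0 < u) (n : ℕ) :
    Real.exp (-u) ≤ (n.factorial : ℝ) / u ^ n := by
  have h := Real.pow_div_factorial_le_exp (hx := le_of_lt hu) (n := n)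
  have hpos : (0:ℝ) < u ^ n / (n.factorial : ℝ) := by positivity
  rw [Real.exp_neg]
  calc (Real.exp u)⁻¹ ≤ (u ^ n / (n.factorial : ℝ))⁻¹ := inv_anti₀ hpos h
    _ = (n.factorial : ℝ) / u ^ n := by rw [inv_div]

lemma domInt {p a γ : ℝ} (hp : p < -1) (ha : 0 < a) (hγ : 0 < γ) :
    IntegrableOn (fun s : ℝ => s ^ p * Real.exp (-(a * s ^ (-γ)))) (Ioi (0:ℝ)) := by
  have hmeas : Measurable fun s : ℝ => s ^ p * Real.exp (-(a * s ^ (-γ))) := by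
    fun_prop
  rw [← Ioc_union_Ioi_eq_Ioi (le_of_lt one_pos)]
  apply IntegrableOn.union
  · -- on Ioc 0 1 : bounded by constant
    obtain ⟨n, hn⟩ : ∃ n : ℕ, 0 ≤ p + γ * n := by
      refine ⟨⌈(-p) / γ⌉₊, ?_⟩
      have := Nat.le_ceil ((-p) / γ)
      have : -p ≤ γ * ⌈(-p)/γ⌉₊ := by
        rw [← div_le_iff₀' hγ]; exact this
      linarith
    have hCint : IntegrableOn (fun _ : ℝ => ((n.factorial : ℝ)) / a ^ n) (Ioc (0:ℝ) 1) :=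
      integrableOn_const measure_Ioc_lt_top.ne enorm_ne_top
    refine Integrable.mono' hCint hmeas.aestronglyMeasurable ?_
    rw [ae_restrict_iff' measurableSet_Ioc]
    filter_upwards with s hs
    obtain ⟨hs0, hs1⟩ := hs
    have hspow : (0:ℝ) < s ^ (-γ) := Real.rpow_pos_of_pos hs0 _
    have h1 : Real.exp (-(a * s ^ (-γ))) ≤ (n.factorial : ℝ) / (a * s ^ (-γ)) ^ n :=
      exp_neg_le_factorial_div (by positivity) n
    have h2 : ((a * s ^ (-γ)) ^ n : ℝ) = a ^ n * s ^ (-(γ * n)) := by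
      rw [mul_pow, ← Real.rpow_natCast (s ^ (-γ)) n, ← Real.rpow_mul (le_of_lt hs0)]
      ring_nf
    have hnorm : ‖s ^ p * Real.exp (-(a * s ^ (-γ)))‖
        = s ^ p * Real.exp (-(a * s ^ (-γ))) := by
      rw [Real.norm_eq_abs, abs_of_nonneg]
      positivity
    rw [hnorm]
    calc s ^ p * Real.exp (-(a * s ^ (-γ)))
        ≤ s ^ p * ((n.factorial : ℝ) / (a ^ n * s ^ (-(γ * n)))) := by
          rw [← h2]
          exact mul_le_mul_of_nonneg_left h1 (by positivity)
      _ = ((n.factorial : ℝ) / a ^ n) * (s ^ p * (s ^ (-(γ * n)))⁻¹) := by ring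
      _ = ((n.factorial : ℝ) / a ^ n) * s ^ (p + γ * n) := by
          rw [← Real.rpow_neg (le_of_lt hs0), neg_neg,
            ← Real.rpow_add hs0]
      _ ≤ ((n.factorial : ℝ) / a ^ n) * 1 := by
          refine mul_le_mul_of_nonneg_left ?_ (by positivity)
          exact Real.rpow_le_one (le_of_lt hs0) hs1 hn
      _ = (n.factorial : ℝ) / a ^ n := mul_one _
  · -- on Ioi 1 : bounded by s ^ p
    refine Integrable.mono' (integrableOn_Ioi_rpow_of_lt hp one_pos)
      hmeas.aestronglyMeasurable ?_
    rw [ae_restrict_iff' measurableSet_Ioi]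
    filter_upwards with s hs
    have hs0 : (0:ℝ) < s := lt_trans one_pos hs
    have hnorm : ‖s ^ p * Real.exp (-(a * s ^ (-γ)))‖
        = s ^ p * Real.exp (-(a * s ^ (-γ))) := by
      rw [Real.norm_eq_abs, abs_of_nonneg]
      positivity
    rw [hnorm]
    have : Real.exp (-(a * s ^ (-γ))) ≤ 1 := by
      rw [Real.exp_le_one_iff]
      have : (0:ℝ) < s ^ (-γ) := Real.rpow_pos_of_pos hs0 _
      nlinarith
    calc s ^ p * Real.exp (-(a * s ^ (-γ))) ≤ s ^ p * 1 :=
          mul_le_mul_of_nonneg_left this (Real.rpow_nonneg (le_of_lt hs0) _)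
      _ = s ^ p := mul_one _

lemma fprof_meas (d dw dJ c r : ℝ) : Measurable fun s : ℝ => fprof d dw dJ c s r := by
  unfold fprof; fun_prop

lemma fprof_nonneg (d dw dJ c r : ℝ) {s : ℝ} (hs : 0 < s) :
    0 ≤ fprof d dw dJ c s r := by
  unfold fprof
  positivity

/-- For `s > 0`, rewrite `fprof` in the form `s^{-d/dw} e^{-a s^{-γ}}`. -/
lemma fprof_eq (d dw dJ c r : ℝ) (hdw : 0 < dw) (hr : 0 ≤ r) {s : ℝ} (hs : 0 < s) :
    fprof d dw dJ c s r
      = s ^ (-(d / dw)) *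
        Real.exp (-((c * r ^ (dw / (dJ - 1))) * s ^ (-(dw / (dJ - 1) / dw)))) := by
  unfold fprof
  congr 2
  have h1 : (r / s ^ (1 / dw)) ^ (dw / (dJ - 1))
      = r ^ (dw / (dJ - 1)) / (s ^ (1 / dw)) ^ (dw / (dJ - 1)) :=
    Real.div_rpow hr (Real.rpow_nonneg (le_of_lt hs) _) _
  have h2 : (s ^ (1 / dw)) ^ (dw / (dJ - 1)) = s ^ (dw / (dJ - 1) / dw) := by
    rw [← Real.rpow_mul (le_of_lt hs)]
    congr 1
    field_simp
  rw [h1, h2, Real.rpow_neg (le_of_lt hs), div_eq_mul_inv]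
  ring

/-- Integrability of the subordinated profile integrand. -/
lemma fInt (d dw dJ c κ r C α : ℝ) (hd : 0 < d) (hdw : 0 < dw) (hdJ : 1 < dJ)
    (hc : 0 < c) (hr : 0 < r) (hκ : 0 ≤ κ) (hα : 0 < α)
    (η : ℝ → ℝ) (hη : Measurable η) (hη0 : ∀ u, 0 < u → 0 ≤ η u)
    (hηle : ∀ u, 0 < u → η u ≤ C * u ^ (-1 - α)) :
    IntegrableOn (fun s => fprof d dw dJ c s r * Real.exp (-κ * s) * η s)
      (Ioi (0:ℝ)) := by
  set β := dw / (dJ - 1) with hβ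
  have hβ0 : 0 < β := div_pos hdw (by linarith)
  set a := c * r ^ β with ha
  have ha0 : 0 < a := by positivity
  set γ := β / dw with hγ
  have hγ0 : 0 < γ := div_pos hβ0 hdw
  set p := -(d / dw) + (-1 - α) with hp
  have hp1 : p < -1 := by
    have : 0 < d / dw := div_pos hd hdw
    rw [hp]; linarith
  have hdom : IntegrableOn (fun s : ℝ => C * (s ^ p * Real.exp (-(a * s ^ (-γ)))))
      (Ioi (0:ℝ)) := (domInt hp1 ha0 hγ0).const_mul C
  refine Integrable.mono' hdom
    (((fprof_meas d dw dJ c r).mul (by fun_prop)).mul hη).aestronglyMeasurable ?_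
  rw [ae_restrict_iff' measurableSet_Ioi]
  filter_upwards with s hs
  have hs0 : (0:ℝ) < s := hs
  have hf0 : 0 ≤ fprof d dw dJ c s r := fprof_nonneg d dw dJ c r hs0
  have he0 : (0:ℝ) < Real.exp (-κ * s) := Real.exp_pos _
  have hnorm : ‖fprof d dw dJ c s r * Real.exp (-κ * s) * η s‖
      = fprof d dw dJ c s r * Real.exp (-κ * s) * η s := by
    rw [Real.norm_eq_abs, abs_of_nonneg]
    have := hη0 s hs0
    positivity
  rw [hnorm]
  have he1 : Real.exp (-κ * s) ≤ 1 := by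
    rw [Real.exp_le_one_iff]
    nlinarith
  calc fprof d dw dJ c s r * Real.exp (-κ * s) * η s
      ≤ fprof d dw dJ c s r * 1 * (C * s ^ (-1 - α)) := by
        apply mul_le_mul
        · exact mul_le_mul_of_nonneg_left he1 hf0
        · exact hηle s hs0
        · exact hη0 s hs0
        · positivity
    _ = C * (s ^ p * Real.exp (-(a * s ^ (-γ)))) := by
        rw [fprof_eq d dw dJ c r hdw (le_of_lt hr) hs0, hp,
          Real.rpow_add hs0]
        ring

lemma qprof_nonneg (d dw α t r : ℝ) (ht : 0 < t) (hr : 0 < r) :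
    0 ≤ qprof d dw α t r := by
  unfold qprof
  have h1 : (0:ℝ) ≤ t ^ (-(d / (α * dw))) := Real.rpow_nonneg (le_of_lt ht) _
  have h2 : (0:ℝ) ≤ (t ^ (1 / (α * dw)) / r) ^ (d + α * dw) := by positivity
  exact mul_nonneg h1 (le_min h2 one_pos.le)

lemma qkey (d dw α L t r : ℝ) (M : ℕ) (hd : 0 < d) (hdw : 0 < dw) (hα : 0 < α)
    (hL : 1 < L) (ht0 : 0 < t) (ht1 : t < 1) (hr : 0 < r)
    (hrL : r ≤ L ^ (M : ℝ)) :
    t * L ^ (-((M : ℝ) * (d + α * dw))) ≤ qprof d dw α t r := by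
  have hL0 : (0:ℝ) < L := lt_trans one_pos hL
  have hadw : 0 < α * dw := mul_pos hα hdw
  have he0 : 0 ≤ (M : ℝ) * (d + α * dw) := by positivity
  have hLe1 : L ^ (-((M : ℝ) * (d + α * dw))) ≤ 1 :=
    Real.rpow_le_one_of_one_le_of_nonpos (le_of_lt hL) (by linarith)
  have hqp : (0:ℝ) < t ^ (-(d / (α * dw))) := Real.rpow_pos_of_pos ht0 _
  unfold qprof
  rcases le_total ((t ^ (1 / (α * dw)) / r) ^ (d + α * dw)) 1 with h | h
  · rw [min_eq_left h]
    have hX : t ^ (-(d / (α * dw))) * (t ^ (1 / (α * dw)) / r) ^ (d + α * dw)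
        = t * r ^ (-(d + α * dw)) := by
      rw [Real.div_rpow (Real.rpow_nonneg (le_of_lt ht0) _) (le_of_lt hr),
        ← Real.rpow_mul (le_of_lt ht0), div_eq_mul_inv _ (r ^ (d + α * dw)),
        ← Real.rpow_neg (le_of_lt hr), ← mul_assoc,
        ← Real.rpow_add ht0,
        show -(d / (α * dw)) + 1 / (α * dw) * (d + α * dw) = 1 by
          field_simp; ring, Real.rpow_one]
    rw [hX]
    apply mul_le_mul_of_nonneg_left _ (le_of_lt ht0)
    have h1 : r ^ (d + α * dw) ≤ L ^ ((M : ℝ) * (d + α * dw)) := by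
      rw [Real.rpow_mul (le_of_lt hL0)]
      exact Real.rpow_le_rpow (le_of_lt hr) hrL (by positivity)
    rw [Real.rpow_neg (le_of_lt hr), Real.rpow_neg (le_of_lt hL0)]
    exact inv_anti₀ (Real.rpow_pos_of_pos hr _) h1
  · rw [min_eq_right h, mul_one]
    have h2 : t * L ^ (-((M : ℝ) * (d + α * dw))) ≤ t := by
      nlinarith [Real.rpow_pos_of_pos hL0 (-((M : ℝ) * (d + α * dw)))]
    have h3 : (1:ℝ) ≤ t ^ (-(d / (α * dw))) :=
      Real.one_le_rpow_of_pos_of_le_one_of_nonpos ht0 (le_of_lt ht1) (by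
        have : 0 < d / (α * dw) := div_pos hd hadw
        linarith)
    linarith

/-- regime `t ∈ (0,1)`, `r ∈ (0,1)` of the estimates following
Theorem 4.1: the reflected relativistic kernel is two-sided comparable to the
stable profile `q(t,r)`, with constants independent of `M`. -/
theorem stmt14 (α m K d dw dJ L c1 c2 c3 c4 c6 Cη A9 A10 : ℝ)
    (hα0 : 0 < α) (hα1 : α < 1) (hm : 0 < m)
    (hK : K = 2 * m ^ (1 - 1 / α))
    (hd : 0 < d) (hdw : 0 < dw) (hdJ : 1 < dJ) (hL : 1 < L)
    (hc1 : 0 < c1) (hc2 : 0 < c2) (hc3 : 0 < c3) (hc4 : 0 < c4) (hc6 : 0 < c6)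
    (hCη : 0 < Cη) (hA9 : 0 < A9) (hA10 : 0 < A10) :
    ∃ C11 C12 : ℝ, 0 < C11 ∧ 0 < C12 ∧
      ∀ M : ℕ,
      ∀ t : ℝ, 0 < t → t < 1 →
      ∀ r : ℝ, 0 < r → r < 1 → r ≤ L ^ (M : ℝ) →
      ∀ η G : ℝ → ℝ, Measurable η → Measurable G →
        (∀ u, 0 < u → 0 ≤ η u) → (∀ s, 0 < s → 0 ≤ G s) →
        (∀ u, 0 < u → η u ≤ Cη * t * u ^ (-1 - α)) →
        (∀ s, 0 < s → c1 * fprof d dw dJ c2 s r ≤ G s) →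
        (∀ s, 0 < s → s < K * L ^ ((M : ℝ) * dw) → G s ≤ c3 * fprof d dw dJ c4 s r) →
        (∀ s, K * L ^ ((M : ℝ) * dw) ≤ s → G s ≤ c6 * L ^ (-((M : ℝ) * d))) →
        (A9 * qprof d dw α t r ≤ Phi d dw dJ α m η c2 t r) →
        (Phi d dw dJ α m η c4 t r ≤ A10 * qprof d dw α t r) →
        C11 * qprof d dw α t r ≤
            Real.exp (m * t) *
              (∫ s in Ioi (0 : ℝ), G s * Real.exp (-(m ^ (1 / α)) * s) * η s) ∧
          Real.exp (m * t) *
              (∫ s in Ioi (0 : ℝ), G s * Real.exp (-(m ^ (1 / α)) * s) * η s) ≤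
            C12 * qprof d dw α t r := by
  have hK0 : 0 < K := by
    rw [hK]; positivity
  have hL0 : (0:ℝ) < L := lt_trans one_pos hL
  have hκ0 : (0:ℝ) ≤ m ^ (1 / α) := Real.rpow_nonneg (le_of_lt hm) _
  refine ⟨c1 * A9, c3 * A10 + Real.exp m * c6 * Cη * K ^ (-α) / α, by positivity,
    by positivity, ?_⟩
  intro M t ht0 ht1 r hr0 hr1 hrL η G hη hG hη0 hG0 hηle hGlow hGup1 hGup2 hPlow hPup
  set S := K * L ^ ((M : ℝ) * dw) with hSdef
  have hS0 : 0 < S := mul_pos hK0 (Real.rpow_pos_of_pos hL0 _)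
  have hCt0 : (0:ℝ) ≤ Cη * t := by positivity
  have hηle' : ∀ u, 0 < u → η u ≤ (Cη * t) * u ^ (-1 - α) := hηle
  -- integrability of the two profile integrands
  have hIF2 : IntegrableOn
      (fun s => fprof d dw dJ c2 s r * Real.exp (-(m ^ (1 / α)) * s) * η s)
      (Ioi (0:ℝ)) :=
    fInt d dw dJ c2 (m ^ (1 / α)) r (Cη * t) α hd hdw hdJ hc2 hr0 hκ0 hα0 η hη hη0 hηle'
  have hIF4 : IntegrableOn
      (fun s => fprof d dw dJ c4 s r * Real.exp (-(m ^ (1 / α)) * s) * η s)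
      (Ioi (0:ℝ)) :=
    fInt d dw dJ c4 (m ^ (1 / α)) r (Cη * t) α hd hdw hdJ hc4 hr0 hκ0 hα0 η hη hη0 hηle'
  set Gf : ℝ → ℝ := fun s => G s * Real.exp (-(m ^ (1 / α)) * s) * η s with hGf
  have hGfmeas : Measurable Gf := (hG.mul (by fun_prop)).mul hη
  have hGfnn : ∀ s : ℝ, 0 < s → 0 ≤ Gf s := by
    intro s hs
    have := hη0 s hs
    have := hG0 s hs
    have := (Real.exp_pos (-(m ^ (1 / α)) * s)).le
    positivity
  -- integrability of Gf on the two pieces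
  have hIGoo : IntegrableOn Gf (Ioo (0:ℝ) S) := by
    refine Integrable.mono' (((hIF4.mono_set Ioo_subset_Ioi_self).const_mul c3))
      hGfmeas.aestronglyMeasurable ?_
    rw [ae_restrict_iff' measurableSet_Ioo]
    filter_upwards with s hs
    obtain ⟨hs0, hsS⟩ := hs
    rw [Real.norm_eq_abs, abs_of_nonneg (hGfnn s hs0)]
    have h1 : G s ≤ c3 * fprof d dw dJ c4 s r := hGup1 s hs0 hsS
    have he := (Real.exp_pos (-(m ^ (1 / α)) * s)).le
    calc Gf s = G s * Real.exp (-(m ^ (1 / α)) * s) * η s := rfl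
      _ ≤ (c3 * fprof d dw dJ c4 s r) * Real.exp (-(m ^ (1 / α)) * s) * η s :=
          mul_le_mul_of_nonneg_right (mul_le_mul_of_nonneg_right h1 he) (hη0 s hs0)
      _ = c3 * (fprof d dw dJ c4 s r * Real.exp (-(m ^ (1 / α)) * s) * η s) := by ring
  have hCc0 : (0:ℝ) ≤ c6 * L ^ (-((M : ℝ) * d)) * (Cη * t) := by positivity
  have hIGIci : IntegrableOn Gf (Ici S) := by
    have hint : IntegrableOn
        (fun s : ℝ => (c6 * L ^ (-((M : ℝ) * d)) * (Cη * t)) * s ^ (-1 - α))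
        (Ici S) := by
      rw [IntegrableOn, Measure.restrict_congr_set Ioi_ae_eq_Ici.symm]
      exact (integrableOn_Ioi_rpow_of_lt (by linarith) hS0).const_mul _
    refine Integrable.mono' hint hGfmeas.aestronglyMeasurable ?_
    rw [ae_restrict_iff' measurableSet_Ici]
    filter_upwards with s hs
    have hs0 : 0 < s := lt_of_lt_of_le hS0 hs
    rw [Real.norm_eq_abs, abs_of_nonneg (hGfnn s hs0)]
    have he1 : Real.exp (-(m ^ (1 / α)) * s) ≤ 1 := by
      rw [Real.exp_le_one_iff]
      nlinarith
    have he0 := (Real.exp_pos (-(m ^ (1 / α)) * s)).le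
    calc Gf s = G s * Real.exp (-(m ^ (1 / α)) * s) * η s := rfl
      _ ≤ (c6 * L ^ (-((M : ℝ) * d))) * 1 * ((Cη * t) * s ^ (-1 - α)) := by
          apply mul_le_mul
          · exact mul_le_mul (hGup2 s hs) he1 he0 (by positivity)
          · exact hηle' s hs0
          · exact hη0 s hs0
          · positivity
      _ = (c6 * L ^ (-((M : ℝ) * d)) * (Cη * t)) * s ^ (-1 - α) := by ring
  have hdisj : Disjoint (Ioo (0:ℝ) S) (Ici S) :=
    (Iio_disjoint_Ici le_rfl).mono_left Ioo_subset_Iio_self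
  have hIG : IntegrableOn Gf (Ioi (0:ℝ)) := by
    rw [← Ioo_union_Ici_eq_Ioi hS0]
    exact hIGoo.union hIGIci
  constructor
  · -- lower bound
    calc c1 * A9 * qprof d dw α t r = c1 * (A9 * qprof d dw α t r) := by ring
      _ ≤ c1 * Phi d dw dJ α m η c2 t r := mul_le_mul_of_nonneg_left hPlow (le_of_lt hc1)
      _ = Real.exp (m * t) * ∫ s in Ioi (0:ℝ),
            c1 * (fprof d dw dJ c2 s r * Real.exp (-(m ^ (1 / α)) * s) * η s) := by
          simp only [Phi, integral_const_mul]
          ring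
      _ ≤ Real.exp (m * t) * ∫ s in Ioi (0:ℝ), Gf s := by
          refine mul_le_mul_of_nonneg_left ?_ (Real.exp_pos _).le
          refine setIntegral_mono_on (hIF2.const_mul c1) hIG measurableSet_Ioi ?_
          intro s hs
          have hs0 : (0:ℝ) < s := hs
          have he := (Real.exp_pos (-(m ^ (1 / α)) * s)).le
          calc c1 * (fprof d dw dJ c2 s r * Real.exp (-(m ^ (1 / α)) * s) * η s)
              = (c1 * fprof d dw dJ c2 s r) * Real.exp (-(m ^ (1 / α)) * s) * η s := by
                ring
            _ ≤ G s * Real.exp (-(m ^ (1 / α)) * s) * η s :=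
                mul_le_mul_of_nonneg_right
                  (mul_le_mul_of_nonneg_right (hGlow s hs0) he) (hη0 s hs0)
  · -- upper bound
    have hsplit : ∫ s in Ioi (0:ℝ), Gf s
        = (∫ s in Ioo (0:ℝ) S, Gf s) + ∫ s in Ici S, Gf s := by
      rw [← Ioo_union_Ici_eq_Ioi hS0, setIntegral_union hdisj measurableSet_Ici hIGoo hIGIci]
    -- first piece
    have hA : Real.exp (m * t) * ∫ s in Ioo (0:ℝ) S, Gf s
        ≤ c3 * A10 * qprof d dw α t r := by
      have h1 : ∫ s in Ioo (0:ℝ) S, Gf s ≤ ∫ s in Ioo (0:ℝ) S,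
          c3 * (fprof d dw dJ c4 s r * Real.exp (-(m ^ (1 / α)) * s) * η s) := by
        refine setIntegral_mono_on hIGoo
          ((hIF4.mono_set Ioo_subset_Ioi_self).const_mul c3) measurableSet_Ioo ?_
        intro s hs
        obtain ⟨hs0, hsS⟩ := hs
        have he := (Real.exp_pos (-(m ^ (1 / α)) * s)).le
        calc Gf s = G s * Real.exp (-(m ^ (1 / α)) * s) * η s := rfl
          _ ≤ (c3 * fprof d dw dJ c4 s r) * Real.exp (-(m ^ (1 / α)) * s) * η s :=
              mul_le_mul_of_nonneg_right
                (mul_le_mul_of_nonneg_right (hGup1 s hs0 hsS) he) (hη0 s hs0)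
          _ = c3 * (fprof d dw dJ c4 s r * Real.exp (-(m ^ (1 / α)) * s) * η s) := by
              ring
      have h2 : ∫ s in Ioo (0:ℝ) S,
            c3 * (fprof d dw dJ c4 s r * Real.exp (-(m ^ (1 / α)) * s) * η s)
          ≤ ∫ s in Ioi (0:ℝ),
            c3 * (fprof d dw dJ c4 s r * Real.exp (-(m ^ (1 / α)) * s) * η s) := by
        refine setIntegral_mono_set (hIF4.const_mul c3) ?_
          (HasSubset.Subset.eventuallyLE Ioo_subset_Ioi_self)
        rw [Filter.EventuallyLE, ae_restrict_iff' measurableSet_Ioi]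
        filter_upwards with s hs
        have hs0 : (0:ℝ) < s := hs
        have := hη0 s hs0
        have := fprof_nonneg d dw dJ c4 r hs0
        have := (Real.exp_pos (-(m ^ (1 / α)) * s)).le
        positivity
      calc Real.exp (m * t) * ∫ s in Ioo (0:ℝ) S, Gf s
          ≤ Real.exp (m * t) * ∫ s in Ioi (0:ℝ),
              c3 * (fprof d dw dJ c4 s r * Real.exp (-(m ^ (1 / α)) * s) * η s) :=
            mul_le_mul_of_nonneg_left (le_trans h1 h2) (Real.exp_pos _).le
        _ = c3 * Phi d dw dJ α m η c4 t r := by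
            simp only [Phi, integral_const_mul]
            ring
        _ ≤ c3 * (A10 * qprof d dw α t r) := mul_le_mul_of_nonneg_left hPup (le_of_lt hc3)
        _ = c3 * A10 * qprof d dw α t r := by ring
    -- second piece
    have hB : Real.exp (m * t) * ∫ s in Ici S, Gf s
        ≤ (Real.exp m * c6 * Cη * K ^ (-α) / α) * qprof d dw α t r := by
      have h1 : ∫ s in Ici S, Gf s
          ≤ ∫ s in Ici S, (c6 * L ^ (-((M : ℝ) * d)) * (Cη * t)) * s ^ (-1 - α) := by
        refine setIntegral_mono_on hIGIci ?_ measurableSet_Ici ?_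
        · rw [IntegrableOn, Measure.restrict_congr_set Ioi_ae_eq_Ici.symm]
          exact (integrableOn_Ioi_rpow_of_lt (by linarith) hS0).const_mul _
        · intro s hs
          have hs0 : 0 < s := lt_of_lt_of_le hS0 hs
          have he1 : Real.exp (-(m ^ (1 / α)) * s) ≤ 1 := by
            rw [Real.exp_le_one_iff]
            nlinarith
          have he0 := (Real.exp_pos (-(m ^ (1 / α)) * s)).le
          calc Gf s = G s * Real.exp (-(m ^ (1 / α)) * s) * η s := rfl
            _ ≤ (c6 * L ^ (-((M : ℝ) * d))) * 1 * ((Cη * t) * s ^ (-1 - α)) := by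
                apply mul_le_mul
                · exact mul_le_mul (hGup2 s hs) he1 he0 (by positivity)
                · exact hηle' s hs0
                · exact hη0 s hs0
                · positivity
            _ = (c6 * L ^ (-((M : ℝ) * d)) * (Cη * t)) * s ^ (-1 - α) := by ring
      have h2 : ∫ s in Ici S, (c6 * L ^ (-((M : ℝ) * d)) * (Cη * t)) * s ^ (-1 - α)
          = (c6 * L ^ (-((M : ℝ) * d)) * (Cη * t)) * (S ^ (-α) / α) := by
        rw [integral_Ici_eq_integral_Ioi, integral_const_mul,
          integral_Ioi_rpow_of_lt (by linarith) hS0]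
        congr 1
        rw [show (-1 - α) + 1 = -α by ring]
        rw [div_eq_div_iff (by linarith) (by linarith)]
        ring
      have hSα : S ^ (-α) = K ^ (-α) * L ^ (((M : ℝ) * dw) * (-α)) := by
        rw [hSdef, Real.mul_rpow (le_of_lt hK0) (Real.rpow_nonneg (le_of_lt hL0) _),
          ← Real.rpow_mul (le_of_lt hL0)]
      have h3 : (c6 * L ^ (-((M : ℝ) * d)) * (Cη * t)) * (S ^ (-α) / α)
          = (c6 * Cη * K ^ (-α) / α) * (t * L ^ (-((M : ℝ) * (d + α * dw)))) := by
        rw [hSα, show -((M : ℝ) * (d + α * dw))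
            = -((M : ℝ) * d) + ((M : ℝ) * dw) * (-α) by ring,
          Real.rpow_add hL0]
        ring
      have h4 : (c6 * Cη * K ^ (-α) / α) * (t * L ^ (-((M : ℝ) * (d + α * dw))))
          ≤ (c6 * Cη * K ^ (-α) / α) * qprof d dw α t r := by
        refine mul_le_mul_of_nonneg_left ?_ (by positivity)
        exact qkey d dw α L t r M hd hdw hα0 hL ht0 ht1 hr0 hrL
      have h5 : ∫ s in Ici S, Gf s ≤ (c6 * Cη * K ^ (-α) / α) * qprof d dw α t r := by
        rw [h2, h3] at h1
        exact le_trans h1 h4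
      have hexp : Real.exp (m * t) ≤ Real.exp m := by
        rw [Real.exp_le_exp]
        calc m * t ≤ m * 1 := mul_le_mul_of_nonneg_left (le_of_lt ht1) (le_of_lt hm)
          _ = m := mul_one m
      have hq0 : 0 ≤ qprof d dw α t r := qprof_nonneg d dw α t r ht0 hr0
      calc Real.exp (m * t) * ∫ s in Ici S, Gf s
          ≤ Real.exp (m * t) * ((c6 * Cη * K ^ (-α) / α) * qprof d dw α t r) :=
            mul_le_mul_of_nonneg_left h5 (Real.exp_pos _).le
        _ ≤ Real.exp m * ((c6 * Cη * K ^ (-α) / α) * qprof d dw α t r) :=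
            mul_le_mul_of_nonneg_right hexp (by positivity)
        _ = (Real.exp m * c6 * Cη * K ^ (-α) / α) * qprof d dw α t r := by ring
    calc Real.exp (m * t) * ∫ s in Ioi (0:ℝ), Gf s
        = (Real.exp (m * t) * ∫ s in Ioo (0:ℝ) S, Gf s)
          + Real.exp (m * t) * ∫ s in Ici S, Gf s := by
          rw [hsplit]; ring
      _ ≤ c3 * A10 * qprof d dw α t r
          + (Real.exp m * c6 * Cη * K ^ (-α) / α) * qprof d dw α t r := add_le_add hA hB
      _ = (c3 * A10 + Real.exp m * c6 * Cη * K ^ (-α) / α) * qprof d dw α t r := by ring
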